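/- Let a < b be real numbers and let g_0,…,g_n be real-valued functions that are continuous on [a,b] and n times differentiable on (a,b). If g_0(x) > 0 for all x ∈ [a,b] and W_0^k(x) > 0 for every x ∈ (a,b) and every k ∈ {1,…,n}, then (g_0,…,g_n) is an M_+-system on [a,b]. -/

import Mathlib

/-- `(g_0, …, g_k)` is a T₊-system on `[a, b]`: the determinant
`det (g_i(x_j))` is strictly positive whenever `a ≤ x_0 < … < x_k ≤ b`. -/
def IsTPlusSystem {k : ℕ} (a b : ℝ) (g : Fin (k + 1) → ℝ → ℝ) : Prop :=
  ∀ x : Fin (k + 1) → ℝ, StrictMono x → (∀ j, x j ∈ Set.Icc a b) →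
    0 < (Matrix.of fun i j => g i (x j)).det

/-- The Wronskian `W_0^k(x) = det (g_i^{(j)}(x))_{i,j=0}^k`, with the
derivatives taken within the open interval `(a, b)`. -/
noncomputable def wronskian (a b : ℝ) {n : ℕ} (g : Fin (n + 1) → ℝ → ℝ)
    (k : ℕ) (hk : k ≤ n) (x : ℝ) : ℝ :=
  (Matrix.of fun i j : Fin (k + 1) =>
    iteratedDerivWithin (j : ℕ) (g (Fin.castLE (by omega) i)) (Set.Ioo a b) x).det

open Set



/-- A tower of derivatives on an open set `I`: `A j` is the `j`-th derivative,
with derivative links valid up to depth `d`. -/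
def Tower (I : Set ℝ) (A : ℕ → ℝ → ℝ) (d : ℕ) : Prop :=
  ∀ j < d, ∀ x ∈ I, HasDerivAt (A j) (A (j + 1) x) x

lemma Tower.mono {I A d d'} (h : Tower I A d) (hdd : d' ≤ d) : Tower I A d' :=
  fun j hj => h j (lt_of_lt_of_le hj hdd)

lemma Tower.shift {I A d} (h : Tower I A (d + 1)) : Tower I (fun j => A (j + 1)) d :=
  fun j hj => h (j + 1) (by omega)

lemma tower_const (I : Set ℝ) (c : ℝ) (d : ℕ) :
    Tower I (fun j => if j = 0 then (fun _ => c) else (fun _ => 0)) d := by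
  intro j hj x hx
  rcases Nat.eq_zero_or_pos j with rfl | hjpos
  · simpa using hasDerivAt_const x c
  · simp only [if_neg (by omega : j ≠ 0), if_neg (by omega : j + 1 ≠ 0)]
    simpa using hasDerivAt_const x (0:ℝ)

lemma Tower.add {I A B d} (hA : Tower I A d) (hB : Tower I B d) :
    Tower I (fun j x => A j x + B j x) d := by
  intro j hj x hx
  exact (hA j hj x hx).add (hB j hj x hx)

lemma Tower.smul {I A d} (c : ℝ) (hA : Tower I A d) :
    Tower I (fun j x => c * A j x) d := by
  intro j hj x hx
  exact (hA j hj x hx).const_mul c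

/-- The Leibniz tower for a product. -/
noncomputable def leibniz (A B : ℕ → ℝ → ℝ) : ℕ → ℝ → ℝ :=
  fun j x => ∑ r ∈ Finset.range (j + 1), (j.choose r : ℝ) * A r x * B (j - r) x

lemma leibniz_zero (A B : ℕ → ℝ → ℝ) : leibniz A B 0 = fun x => A 0 x * B 0 x := by
  funext x; simp [leibniz]

lemma tower_leibniz {I A B d} (hA : Tower I A d) (hB : Tower I B d) :
    Tower I (leibniz A B) d := by
  intro j hj x hx
  have key : HasDerivAt (fun y => ∑ r ∈ Finset.range (j + 1),
      (j.choose r : ℝ) * A r y * B (j - r) y)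
      (∑ r ∈ Finset.range (j + 1),
        ((j.choose r : ℝ) * (A (r+1) x * B (j - r) x) +
         (j.choose r : ℝ) * (A r x * B (j - r + 1) x))) x := by
    apply HasDerivAt.fun_sum
    intro r hr
    have hr' : r ≤ j := Nat.lt_succ_iff.mp (Finset.mem_range.mp hr)
    have hAr : HasDerivAt (fun y => A r y) (A (r+1) x) x := hA r (by omega) x hx
    have hBr : HasDerivAt (fun y => B (j - r) y) (B (j - r + 1) x) x :=
      hB (j - r) (by omega) x hx
    have := (hAr.mul hBr).const_mul (j.choose r : ℝ)
    simpa [mul_assoc, mul_add] using this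
  convert key using 1
  · rfl
  -- show `leibniz A B (j+1) x` equals the sum above
  have expand : leibniz A B (j + 1) x
      = ∑ r ∈ Finset.range (j + 1), ((j+1).choose (r+1) : ℝ) * A (r+1) x * B (j - r) x
        + A 0 x * B (j + 1) x := by
    rw [leibniz, Finset.sum_range_succ']
    congr 1
    · apply Finset.sum_congr rfl
      intro r hr
      have hr' : r ≤ j := Nat.lt_succ_iff.mp (Finset.mem_range.mp hr)
      congr 2
      omega
    · simp
  rw [expand, Finset.sum_add_distrib]
  have h1 : ∑ r ∈ Finset.range (j + 1), (j.choose r : ℝ) * (A (r+1) x * B (j - r) x)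
      = ∑ r ∈ Finset.range (j + 1), (j.choose r : ℝ) * A (r+1) x * B (j - r) x := by
    apply Finset.sum_congr rfl; intros; ring
  have h2 : ∑ r ∈ Finset.range (j + 1), (j.choose r : ℝ) * (A r x * B (j - r + 1) x)
      = ∑ r ∈ Finset.range j, (j.choose (r+1) : ℝ) * A (r+1) x * B (j - r) x
        + A 0 x * B (j + 1) x := by
    rw [Finset.sum_range_succ']
    congr 1
    · apply Finset.sum_congr rfl
      intro r hr
      have hr' : r < j := Finset.mem_range.mp hr
      have : j - (r+1) + 1 = j - r := by omega
      rw [this]; ring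
    · simp
  rw [h1, h2]
  have h3 : ∑ r ∈ Finset.range (j + 1), ((j+1).choose (r+1) : ℝ) * A (r+1) x * B (j - r) x
      = ∑ r ∈ Finset.range (j + 1), ((j.choose r : ℝ) + (j.choose (r+1) : ℝ)) * A (r+1) x * B (j - r) x := by
    apply Finset.sum_congr rfl
    intro r hr
    congr 2
    rw [Nat.choose_succ_succ]
    push_cast; ring
  rw [h3]
  have h4 : ∑ r ∈ Finset.range (j + 1), (j.choose (r+1) : ℝ) * A (r+1) x * B (j - r) x
      = ∑ r ∈ Finset.range j, (j.choose (r+1) : ℝ) * A (r+1) x * B (j - r) x := by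
    rw [Finset.sum_range_succ]
    simp [Nat.choose_succ_self]
  have lhs_eq : ∑ r ∈ Finset.range (j + 1), ((j.choose r : ℝ) + (j.choose (r+1) : ℝ)) * A (r+1) x * B (j - r) x
      = ∑ r ∈ Finset.range (j + 1), (j.choose r : ℝ) * A (r+1) x * B (j - r) x
        + ∑ r ∈ Finset.range (j + 1), (j.choose (r+1) : ℝ) * A (r+1) x * B (j - r) x := by
    rw [← Finset.sum_add_distrib]
    apply Finset.sum_congr rfl; intros; ring
  rw [lhs_eq, h4]
  ring



/-- Inverse tower: if `B` is a depth-`d` tower with nonvanishing bottom on `I`,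
then `(B 0)⁻¹` extends to a depth-`d` tower. -/
lemma tower_inv {I : Set ℝ} {B : ℕ → ℝ → ℝ} :
    ∀ d, Tower I B d → (∀ x ∈ I, B 0 x ≠ 0) →
    ∃ C : ℕ → ℝ → ℝ, Tower I C d ∧ C 0 = fun x => (B 0 x)⁻¹ := by
  intro d
  induction d with
  | zero =>
    intro _ _
    exact ⟨fun _ x => (B 0 x)⁻¹, fun j hj => by omega, rfl⟩
  | succ d IH =>
    intro hB hB0
    obtain ⟨C', hC', hC'0⟩ := IH (hB.mono (Nat.le_succ d)) hB0
    -- derivative of (B 0)⁻¹ is -(B 1) * (B 0)⁻¹ * (B 0)⁻¹, build its tower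
    have hshift : Tower I (fun j => B (j + 1)) d := hB.shift
    have hG : Tower I (leibniz (fun j => B (j + 1)) (leibniz C' C')) d :=
      tower_leibniz hshift (tower_leibniz hC' hC')
    have hGm : Tower I (fun j x => (-1 : ℝ) * leibniz (fun j => B (j + 1)) (leibniz C' C') j x) d :=
      hG.smul (-1)
    set G : ℕ → ℝ → ℝ := fun j x => (-1 : ℝ) * leibniz (fun j => B (j + 1)) (leibniz C' C') j x with hGdef
    refine ⟨fun j => if j = 0 then (fun x => (B 0 x)⁻¹) else G (j - 1), ?_, by simp⟩
    intro j hj x hx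
    rcases Nat.eq_zero_or_pos j with rfl | hjpos
    · simp only [if_pos rfl, if_neg (one_ne_zero), ↓reduceIte]
      have hd : HasDerivAt (B 0) (B 1 x) x := hB 0 (by omega) x hx
      have := hd.inv (hB0 x hx)
      refine this.congr_deriv (Eq.symm ?_)
      have hG0 : G 0 x = -(B 1 x) * ((B 0 x)⁻¹ * (B 0 x)⁻¹) := by
        simp [hGdef, leibniz, hC'0]
      show G (0 + 1 - 1) x = _
      norm_num [hG0]
      rw [sq, div_eq_mul_inv, mul_inv]
      ring
    · simp only [if_neg (by omega : j ≠ 0), if_neg (by omega : j + 1 ≠ 0)]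
      have : j - 1 < d := by omega
      have hlink := hGm (j - 1) this x hx
      have e1 : j - 1 + 1 = j := by omega
      rw [e1] at hlink
      have e2 : j + 1 - 1 = j := by omega
      rw [e2]
      exact hlink

/-- Towers over an open set are unique (given the bottom function on `I`). -/
lemma tower_unique {I : Set ℝ} (hI : IsOpen I) {A B : ℕ → ℝ → ℝ} {d : ℕ}
    (hA : Tower I A d) (hB : Tower I B d) (h0 : Set.EqOn (A 0) (B 0) I) :
    ∀ j ≤ d, Set.EqOn (A j) (B j) I := by
  intro j
  induction j with
  | zero => intro _; exact h0
  | succ j IH =>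
    intro hjd x hx
    have hj : j < d := by omega
    have hEq : A j =ᶠ[nhds x] B j :=
      Filter.eventuallyEq_of_mem (hI.mem_nhds hx) (IH (by omega))
    have h1 : HasDerivAt (B j) (A (j + 1) x) x :=
      (hA j hj x hx).congr_of_eventuallyEq hEq.symm
    exact h1.unique (hB j hj x hx)


lemma wronskian_factor {I : Set ℝ} (hI : IsOpen I) {d k : ℕ} (hkd : k + 1 ≤ d)
    (G : Fin (k + 2) → ℕ → ℝ → ℝ) (hT : ∀ i, Tower I (G i) d)
    (hpos : ∀ x ∈ I, G 0 0 x ≠ 0)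
    (Ginv : ℕ → ℝ → ℝ) (hTinv : Tower I Ginv d)
    (hinv0 : Ginv 0 = fun x => (G 0 0 x)⁻¹)
    {x : ℝ} (hx : x ∈ I) :
    Matrix.det (Matrix.of fun i j : Fin (k + 2) => G i (j : ℕ) x)
      = (G 0 0 x) ^ (k + 2) *
        Matrix.det (Matrix.of fun i j : Fin (k + 1) => leibniz (G i.succ) Ginv ((j : ℕ) + 1) x) := by
  set Th : Fin (k + 2) → ℕ → ℝ → ℝ := fun i => leibniz (G i) Ginv with hThdef
  have hThT : ∀ i, Tower I (Th i) d := fun i => tower_leibniz (hT i) hTinv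
  have hTh0 : ∀ i, ∀ y, Th i 0 y = G i 0 y * (G 0 0 y)⁻¹ := by
    intro i y; simp [hThdef, leibniz, hinv0]
  -- (a) G i j = P i j on I where P i = leibniz (Th i) (G 0)
  have hPG : ∀ i : Fin (k + 2), ∀ j ≤ d, Set.EqOn (leibniz (Th i) (G 0) j) (G i j) I := by
    intro i
    apply tower_unique hI (tower_leibniz (hThT i) (hT 0)) (hT i)
    intro y hy
    have : leibniz (Th i) (G 0) 0 y = Th i 0 y * G 0 0 y := by simp [leibniz]
    rw [this, hTh0]
    field_simp [hpos y hy]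
  -- matrices
  set MG : Matrix (Fin (k + 2)) (Fin (k + 2)) ℝ := Matrix.of fun i j => G i (j : ℕ) x with hMG
  set MTh : Matrix (Fin (k + 2)) (Fin (k + 2)) ℝ := Matrix.of fun i j => Th i (j : ℕ) x with hMTh
  set T : Matrix (Fin (k + 2)) (Fin (k + 2)) ℝ :=
    Matrix.of (fun r j => if (r : ℕ) ≤ (j : ℕ) then (((j : ℕ)).choose r : ℝ) * G 0 ((j : ℕ) - r) x else 0)
    with hTdef
  have hfact : MG = MTh * T := by
    ext i j
    have h1 : (MTh * T) i j = ∑ r : Fin (k + 2), Th i (r : ℕ) x *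
        (if (r : ℕ) ≤ (j : ℕ) then (((j : ℕ)).choose r : ℝ) * G 0 ((j : ℕ) - r) x else 0) := by
      simp [Matrix.mul_apply, hMTh, hTdef]
    rw [h1]
    have h2 : ∑ r : Fin (k + 2), Th i (r : ℕ) x *
        (if (r : ℕ) ≤ (j : ℕ) then (((j : ℕ)).choose r : ℝ) * G 0 ((j : ℕ) - r) x else 0)
        = ∑ r ∈ Finset.range (k + 2), Th i r x *
          (if r ≤ (j : ℕ) then (((j : ℕ)).choose r : ℝ) * G 0 ((j : ℕ) - r) x else 0) := by
      rw [Finset.sum_range fun r => Th i r x *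
          (if r ≤ (j : ℕ) then (((j : ℕ)).choose r : ℝ) * G 0 ((j : ℕ) - r) x else 0)]
    rw [h2]
    have h3 : ∑ r ∈ Finset.range (k + 2), Th i r x *
          (if r ≤ (j : ℕ) then (((j : ℕ)).choose r : ℝ) * G 0 ((j : ℕ) - r) x else 0)
        = ∑ r ∈ Finset.range ((j : ℕ) + 1), Th i r x *
          ((((j : ℕ)).choose r : ℝ) * G 0 ((j : ℕ) - r) x) := by
      have hsub : Finset.range ((j : ℕ) + 1) ⊆ Finset.range (k + 2) :=
        Finset.range_subset_range.mpr (by have := j.isLt; omega)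
      rw [← Finset.sum_subset hsub (fun r _ hr => by
        rw [if_neg (by simp only [Finset.mem_range, not_lt] at hr; omega), mul_zero])]
      exact Finset.sum_congr rfl (fun r hr => by
        rw [if_pos (by simp only [Finset.mem_range] at hr; omega)])
    rw [h3]
    have h4 := hPG i (j : ℕ) (by have := j.isLt; omega : (j : ℕ) ≤ d) hx
    have h5 : leibniz (Th i) (G 0) (j : ℕ) x = G i (j : ℕ) x := h4
    show G i (j : ℕ) x = _
    rw [← h5]
    simp only [leibniz]
    apply Finset.sum_congr rfl
    intros; ring
  have hdetT : T.det = (G 0 0 x) ^ (k + 2) := by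
    have htri : T.BlockTriangular id := by
      intro r j h
      simp only [hTdef, Matrix.of_apply]
      rw [if_neg]
      exact fun hle => absurd hle (by simp at h ⊢; omega)
    rw [Matrix.det_of_upperTriangular htri]
    have : ∀ j : Fin (k + 2), T j j = G 0 0 x := by
      intro j
      simp [hTdef]
    rw [Finset.prod_congr rfl (fun j _ => this j)]
    simp [Finset.card_univ]
  -- (b) row zero of MTh is (1,0,...,0)
  have hrow0 : ∀ j : Fin (k + 2), MTh 0 j = if (j : ℕ) = 0 then 1 else 0 := by
    intro j
    set K : ℕ → ℝ → ℝ := fun j => if j = 0 then (fun _ => (1:ℝ)) else (fun _ => 0) with hK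
    have huniq := tower_unique hI (hThT 0) (tower_const I 1 d) (by
      intro y hy
      rw [hTh0 0 y]
      simp only [if_pos rfl, ↓reduceIte]
      field_simp [hpos y hy])
    have := huniq (j : ℕ) (by have := j.isLt; omega) hx
    simp only [hMTh, Matrix.of_apply]
    rw [this]
    by_cases hj : (j : ℕ) = 0 <;> simp [hj]
  have hdetTh : MTh.det =
      Matrix.det (Matrix.of fun i j : Fin (k + 1) => leibniz (G i.succ) Ginv ((j : ℕ) + 1) x) := by
    rw [Matrix.det_succ_row_zero]
    rw [Finset.sum_eq_single (0 : Fin (k + 2))]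
    · rw [hrow0 0]
      simp only [if_pos rfl, Fin.val_zero, pow_zero, one_mul, mul_one]
      have hsub : (MTh.submatrix Fin.succ (Fin.succAbove 0))
          = Matrix.of (fun i j : Fin (k + 1) => leibniz (G i.succ) Ginv ((j : ℕ) + 1) x) := by
        ext i j
        simp only [Matrix.submatrix_apply, hMTh, Matrix.of_apply, Fin.succAbove_zero,
          Fin.val_succ]
        rfl
      rw [hsub]
      simp
    · intro j _ hj
      rw [hrow0 j]
      rw [if_neg (by rwa [Fin.val_eq_zero_iff])]
      ring
    · intro h; exact absurd (Finset.mem_univ _) h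
  rw [hfact, Matrix.det_mul, hdetT, hdetTh]
  ring

noncomputable def detColLM {m : ℕ} (A : Matrix (Fin m) (Fin m) ℝ) (p : Fin m) :
    (Fin m → ℝ) →L[ℝ] ℝ :=
  LinearMap.toContinuousLinearMap
    { toFun := fun v => (A.updateCol p v).det
      map_add' := Matrix.det_updateCol_add A p
      map_smul' := fun c v => by simpa using Matrix.det_updateCol_smul A p c v }

lemma detColLM_apply {m : ℕ} (A : Matrix (Fin m) (Fin m) ℝ) (p : Fin m) (v : Fin m → ℝ) :
    detColLM A p v = (A.updateCol p v).det := rfl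

lemma det_integral_pos {a b : ℝ} {M : ℕ} (f : Fin (M + 1) → ℝ → ℝ)
    (hcont : ∀ i, ContinuousOn (f i) (Set.Ioo a b))
    (hpos : ∀ s : Fin (M + 1) → ℝ, StrictMono s → (∀ j, s j ∈ Set.Ioo a b) →
      0 < Matrix.det (Matrix.of fun i j => f i (s j)))
    (y : Fin (M + 2) → ℝ) (hy : StrictMono y) (hyI : ∀ j, y j ∈ Set.Ioo a b) :
    0 < Matrix.det (Matrix.of fun i j : Fin (M + 1) =>
      ∫ t in (y j.castSucc)..(y j.succ), f i t) := by
  have hgapsub : ∀ j : Fin (M + 1), Set.Ioo (y j.castSucc) (y j.succ) ⊆ Set.Ioo a b := by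
    intro j t ht
    exact ⟨(hyI j.castSucc).1.trans ht.1, ht.2.trans (hyI j.succ).2⟩
  have hIccsub : ∀ j : Fin (M + 1), Set.Icc (y j.castSucc) (y j.succ) ⊆ Set.Ioo a b := by
    intro j t ht
    constructor
    · exact lt_of_lt_of_le (hyI j.castSucc).1 ht.1
    · exact lt_of_le_of_lt ht.2 (hyI j.succ).2
  have hylt : ∀ j : Fin (M + 1), y j.castSucc < y j.succ :=
    fun j => hy (Fin.castSucc_lt_succ (i := j))
  have key : ∀ q : ℕ, q ≤ M + 1 → ∀ s : Fin (M + 1) → ℝ,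
      (∀ j : Fin (M + 1), (j : ℕ) < M + 1 - q → s j ∈ Set.Ioo (y j.castSucc) (y j.succ)) →
      0 < Matrix.det (Matrix.of fun i j : Fin (M + 1) =>
        if (j : ℕ) < M + 1 - q then f i (s j) else ∫ t in (y j.castSucc)..(y j.succ), f i t) := by
    intro q
    induction q with
    | zero =>
      intro _ s hs
      have hsj : ∀ j, s j ∈ Set.Ioo (y j.castSucc) (y j.succ) :=
        fun j => hs j (by have := j.isLt; omega)
      have hmat : (Matrix.of fun i j : Fin (M + 1) =>
          if (j : ℕ) < M + 1 - 0 then f i (s j) else ∫ t in (y j.castSucc)..(y j.succ), f i t)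
          = Matrix.of fun i j => f i (s j) := by
        ext i j
        simp only [Matrix.of_apply]
        rw [if_pos (by have := j.isLt; omega)]
      rw [hmat]
      apply hpos
      · rw [Fin.strictMono_iff_lt_succ]
        intro i
        have h1 : s i.castSucc < y i.castSucc.succ := (hsj i.castSucc).2
        have h2 : y i.succ.castSucc < s i.succ := (hsj i.succ).1
        have he : i.castSucc.succ = i.succ.castSucc := by
          apply Fin.ext; simp
        rw [he] at h1
        exact h1.trans h2
      · intro j
        exact hgapsub j (hsj j)
    | succ q IH =>
      intro hq s hs
      set p : Fin (M + 1) := ⟨M - q, by omega⟩ with hp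
      have hpv : (p : ℕ) = M - q := rfl
      have hq' : M + 1 - (q + 1) = M - q := by omega
      have hq'' : M + 1 - q = (M - q) + 1 := by omega
      -- the current matrix
      set A : Matrix (Fin (M + 1)) (Fin (M + 1)) ℝ := Matrix.of fun i j =>
        if (j : ℕ) < M + 1 - (q + 1) then f i (s j)
        else ∫ t in (y j.castSucc)..(y j.succ), f i t with hA
      -- vector-valued integrand
      set F : ℝ → (Fin (M + 1) → ℝ) := fun t i => f i t with hF
      have hFcont : ContinuousOn F (Set.Icc (y p.castSucc) (y p.succ)) := by
        apply continuousOn_pi.mpr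
        intro i
        exact (hcont i).mono (hIccsub p)
      have hFint : IntervalIntegrable F MeasureTheory.volume (y p.castSucc) (y p.succ) := by
        apply ContinuousOn.intervalIntegrable
        rwa [Set.uIcc_of_le (hylt p).le]
      have hcol : ∀ i, (∫ t in (y p.castSucc)..(y p.succ), F t) i
          = ∫ t in (y p.castSucc)..(y p.succ), f i t := by
        intro i
        have := (ContinuousLinearMap.proj (R := ℝ) (φ := fun _ : Fin (M + 1) => ℝ)
          i).intervalIntegral_comp_comm hFint
        simp only [ContinuousLinearMap.proj_apply] at this
        rw [← this]
      -- A's column p is the integral of F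
      have hAcol : A = A.updateCol p (∫ t in (y p.castSucc)..(y p.succ), F t) := by
        rw [show (∫ t in (y p.castSucc)..(y p.succ), F t) = fun i => A i p by
          funext i
          rw [hcol i]
          simp only [hA, Matrix.of_apply]
          rw [if_neg (show ¬ ((p : ℕ) < M + 1 - (q + 1)) by rw [hpv]; omega)]]
        rw [Matrix.updateCol_eq_self]
      have hdet : A.det = ∫ t in (y p.castSucc)..(y p.succ), (detColLM A p) (F t) := by
        rw [(detColLM A p).intervalIntegral_comp_comm hFint, detColLM_apply, ← hAcol]
      rw [hdet]
      apply intervalIntegral.intervalIntegral_pos_of_pos_on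
      · apply ContinuousOn.intervalIntegrable
        rw [Set.uIcc_of_le (hylt p).le]
        exact (detColLM A p).continuous.comp_continuousOn hFcont
      · intro t ht
        have hmat2 : (A.updateCol p (F t)) = Matrix.of fun i j : Fin (M + 1) =>
            if (j : ℕ) < M + 1 - q then f i (Function.update s p t j)
            else ∫ u in (y j.castSucc)..(y j.succ), f i u := by
          ext i j
          by_cases hj : j = p
          · subst hj
            rw [Matrix.updateCol_self]
            simp only [Matrix.of_apply]
            rw [if_pos (show (p : ℕ) < M + 1 - q by rw [hpv]; omega), Function.update_self]
          · rw [Matrix.updateCol_ne hj]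
            simp only [hA, Matrix.of_apply]
            rw [Function.update_of_ne hj]
            have hjp : (j : ℕ) ≠ M - q := by
              intro hc
              exact hj (Fin.ext (by simp [hpv, hc]))
            by_cases hlt : (j : ℕ) < M + 1 - (q + 1)
            · rw [if_pos hlt, if_pos (by omega)]
            · rw [if_neg hlt, if_neg (by omega)]
        rw [detColLM_apply, hmat2]
        apply IH (by omega)
        intro j hj
        by_cases hjp : j = p
        · subst hjp
          rw [Function.update_self]
          exact ht
        · rw [Function.update_of_ne hjp]
          apply hs
          have : (j : ℕ) ≠ M - q := fun hc => hjp (Fin.ext (by simp [hpv, hc]))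
          omega
      · exact hylt p
  have hmat : (Matrix.of fun i j : Fin (M + 1) => ∫ t in (y j.castSucc)..(y j.succ), f i t)
      = Matrix.of fun i j : Fin (M + 1) =>
        if (j : ℕ) < M + 1 - (M + 1) then f i (y j.castSucc)
        else ∫ t in (y j.castSucc)..(y j.succ), f i t := by
    ext i j
    simp only [Matrix.of_apply]
    rw [if_neg (by omega)]
  rw [hmat]
  exact key (M + 1) le_rfl _ (fun j hj => by omega)


/-- Positivity of `G 0 0` from the order-0 "Wronskian". -/
lemma pos_of_hW {a b : ℝ} {m : ℕ} {G : Fin (m + 1) → ℕ → ℝ → ℝ}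
    (hW : ∀ k : ℕ, (hk : k + 1 ≤ m + 1) → ∀ x ∈ Set.Ioo a b,
      0 < Matrix.det (Matrix.of fun i j : Fin (k + 1) => G (Fin.castLE hk i) (j : ℕ) x)) :
    ∀ x ∈ Set.Ioo a b, 0 < G 0 0 x := by
  intro x hx
  have h := hW 0 (by omega) x hx
  rwa [Matrix.det_fin_one, Matrix.of_apply, show (Fin.castLE (by omega) (0 : Fin 1)) = (0 : Fin (m+1)) from rfl] at h

/-- The reduction step: from a system `(g_0, …, g_m)` to `((g_i/g_0)')_{i=1}^m`. -/
lemma reduce {a b : ℝ} {d m : ℕ} (hm : 1 ≤ m) (hmd : m ≤ d)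
    (G : Fin (m + 1) → ℕ → ℝ → ℝ) (hT : ∀ i, Tower (Set.Ioo a b) (G i) d)
    (hW : ∀ k : ℕ, (hk : k + 1 ≤ m + 1) → ∀ x ∈ Set.Ioo a b,
      0 < Matrix.det (Matrix.of fun i j : Fin (k + 1) => G (Fin.castLE hk i) (j : ℕ) x)) :
    ∃ H : Fin m → ℕ → ℝ → ℝ,
      (∀ i, Tower (Set.Ioo a b) (H i) (d - 1)) ∧
      (∀ k : ℕ, (hk : k + 1 ≤ m) → ∀ x ∈ Set.Ioo a b,
        0 < Matrix.det (Matrix.of fun i j : Fin (k + 1) => H (Fin.castLE hk i) (j : ℕ) x)) ∧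
      (∀ i : Fin m, ∀ x ∈ Set.Ioo a b,
        HasDerivAt (fun t => G i.succ 0 t * (G 0 0 t)⁻¹) (H i 0 x) x) := by
  have hpos := pos_of_hW hW
  have hne : ∀ x ∈ Set.Ioo a b, G 0 0 x ≠ 0 := fun x hx => (hpos x hx).ne'
  obtain ⟨Ginv, hTinv, hinv0⟩ := tower_inv d (hT 0) hne
  refine ⟨fun i j => leibniz (G i.succ) Ginv (j + 1), ?_, ?_, ?_⟩
  · intro i j hj x hx
    exact tower_leibniz (hT i.succ) hTinv (j + 1) (by omega) x hx
  · intro k hk x hx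
    have hk2 : k + 2 ≤ m + 1 := by omega
    set G' : Fin (k + 2) → ℕ → ℝ → ℝ := fun i => G (Fin.castLE hk2 i) with hG'
    have hfac := wronskian_factor isOpen_Ioo (by omega : k + 1 ≤ d) G'
      (fun i => hT _) (fun x hx => hne x hx) Ginv hTinv hinv0 hx
    have hWk := hW (k + 1) hk2 x hx
    rw [hfac] at hWk
    have hidx : ∀ i : Fin (k + 1), Fin.castLE hk2 i.succ = (Fin.castLE hk i).succ :=
      fun i => Fin.ext (by simp)
    have hmatch : (Matrix.of fun i j : Fin (k + 1) => leibniz (G (Fin.castLE hk i).succ) Ginv ((j : ℕ) + 1) x)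
        = (Matrix.of fun i j : Fin (k + 1) => leibniz (G' i.succ) Ginv ((j : ℕ) + 1) x) := by
      ext i j
      simp only [Matrix.of_apply, hG', hidx i]
    rw [hmatch]
    have hc : 0 < (G' 0 0 x) ^ (k + 2) := by
      have : G' 0 0 x = G 0 0 x := by
        simp only [hG']
        congr
      rw [this]
      exact pow_pos (hpos x hx) _
    by_contra hle
    push_neg at hle
    nlinarith [hWk, hc]
  · intro i x hx
    have h := tower_leibniz (hT i.succ) hTinv 0 (by omega) x hx
    rw [leibniz_zero] at h
    have : (fun t => G i.succ 0 t * (G 0 0 t)⁻¹) = fun t => G i.succ 0 t * Ginv 0 t := by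
      funext t; rw [hinv0]
    rw [this]
    exact h


/-- Interior T₊ property from positive Wronskian towers. -/
theorem tplus_interior {a b : ℝ} : ∀ (m : ℕ) (G : Fin (m + 1) → ℕ → ℝ → ℝ),
    (∀ i, Tower (Set.Ioo a b) (G i) m) →
    (∀ k : ℕ, (hk : k + 1 ≤ m + 1) → ∀ x ∈ Set.Ioo a b,
      0 < Matrix.det (Matrix.of fun i j : Fin (k + 1) => G (Fin.castLE hk i) (j : ℕ) x)) →
    ∀ x : Fin (m + 1) → ℝ, StrictMono x → (∀ j, x j ∈ Set.Ioo a b) →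
      0 < Matrix.det (Matrix.of fun i j => G i 0 (x j)) := by
  intro m
  induction m with
  | zero =>
    intro G _ hW x _ hxI
    rw [Matrix.det_fin_one]
    have := pos_of_hW hW (x 0) (hxI 0)
    simpa using this
  | succ m IH =>
    intro G hT hW x hx hxI
    have hpos := pos_of_hW hW
    have hne : ∀ t ∈ Set.Ioo a b, G 0 0 t ≠ 0 := fun t ht => (hpos t ht).ne'
    rcases Nat.eq_zero_or_pos m with rfl | hm
    · -- base case: 2×2 via the mean value theorem
      have hx01 : x 0 < x 1 := hx (by norm_num : (0 : Fin 2) < 1)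
      have hIccsub : Set.Icc (x 0) (x 1) ⊆ Set.Ioo a b := fun t ht =>
        ⟨lt_of_lt_of_le (hxI 0).1 ht.1, lt_of_le_of_lt ht.2 (hxI 1).2⟩
      have hIoosub : Set.Ioo (x 0) (x 1) ⊆ Set.Ioo a b := fun t ht =>
        ⟨(hxI 0).1.trans ht.1, ht.2.trans (hxI 1).2⟩
      set φ : ℝ → ℝ := fun t => G 1 0 t * (G 0 0 t)⁻¹ with hφ
      set φ' : ℝ → ℝ := fun t =>
        G 1 1 t * (G 0 0 t)⁻¹ + G 1 0 t * (-(G 0 1 t) / (G 0 0 t) ^ 2) with hφ'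
      have hd : ∀ t ∈ Set.Ioo a b, HasDerivAt φ (φ' t) t := by
        intro t ht
        have h1 : HasDerivAt (G 1 0) (G 1 1 t) t := hT 1 0 (by omega) t ht
        have h0 : HasDerivAt (G 0 0) (G 0 1 t) t := hT 0 0 (by omega) t ht
        exact h1.mul (h0.inv (hne t ht))
      have hcφ : ContinuousOn φ (Set.Icc (x 0) (x 1)) := by
        intro t ht
        exact ((hd t (hIccsub ht)).continuousAt).continuousWithinAt
      obtain ⟨c, hc, hslope⟩ := exists_hasDerivAt_eq_slope φ φ' hx01 hcφ
        (fun t ht => hd t (hIoosub ht))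
      have hcI : c ∈ Set.Ioo a b := hIoosub hc
      have hW2 := hW 1 (by omega) c hcI
      rw [Matrix.det_fin_two] at hW2
      simp only [Matrix.of_apply] at hW2
      have hWc : 0 < G 0 0 c * G 1 1 c - G 0 1 c * G 1 0 c := by
        convert hW2 using 2 <;> rfl
      have hφ'pos : 0 < φ' c := by
        have hne2 : G 0 0 c ≠ 0 := hne c hcI
        have : φ' c = (G 0 0 c * G 1 1 c - G 0 1 c * G 1 0 c) / (G 0 0 c) ^ 2 := by
          simp only [hφ']
          field_simp
          ring
        rw [this]
        exact div_pos hWc (pow_pos (hpos c hcI) 2)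
      have hne10 : x 1 - x 0 ≠ 0 := sub_ne_zero.mpr hx01.ne'
      have hδ : φ (x 1) - φ (x 0) = (x 1 - x 0) * φ' c := by
        rw [hslope]
        field_simp
      rw [Matrix.det_fin_two]
      simp only [Matrix.of_apply]
      have he : G 0 0 (x 0) * G 1 0 (x 1) - G 0 0 (x 1) * G 1 0 (x 0)
          = G 0 0 (x 0) * G 0 0 (x 1) * (φ (x 1) - φ (x 0)) := by
        simp only [hφ]
        field_simp [hne (x 0) (hxI 0), hne (x 1) (hxI 1)]
      have h0pos := hpos (x 0) (hxI 0)
      have h1pos := hpos (x 1) (hxI 1)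
      calc (0:ℝ) < G 0 0 (x 0) * G 0 0 (x 1) * ((x 1 - x 0) * φ' c) :=
            mul_pos (mul_pos h0pos h1pos) (mul_pos (by linarith) hφ'pos)
        _ = G 0 0 (x 0) * G 1 0 (x 1) - G 0 0 (x 1) * G 1 0 (x 0) := by rw [← hδ, ← he]
        _ = _ := by norm_num
    · -- inductive step: m ≥ 1
      obtain ⟨H, hHT, hHW, hHd⟩ := reduce (by omega : 1 ≤ m + 1) le_rfl G hT hW
      have hHT' : ∀ i, Tower (Set.Ioo a b) (H i) m := by
        intro i
        have := hHT i
        simpa using this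
      have hIH := IH H hHT' (fun k hk => hHW k hk)
      have hHcont : ∀ i, ContinuousOn (H i 0) (Set.Ioo a b) := by
        intro i t ht
        exact ((hHT' i 0 (by omega) t ht).continuousAt).continuousWithinAt
      -- the diagonal-scaled matrix of h values
      set ψ : Fin (m + 2) → ℝ → ℝ := fun i t => G i 0 t * (G 0 0 t)⁻¹ with hψ
      set Hmat : Matrix (Fin (m + 2)) (Fin (m + 2)) ℝ := Matrix.of fun i j => ψ i (x j)
        with hHmat
      have hfact1 : (Matrix.of fun i j : Fin (m + 2) => G i 0 (x j))
          = Hmat * Matrix.diagonal (fun j => G 0 0 (x j)) := by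
        ext i j
        rw [Matrix.mul_diagonal]
        simp only [hHmat, Matrix.of_apply, hψ]
        field_simp [hne (x j) (hxI j)]
      -- column difference matrix
      set S : Matrix (Fin (m + 2)) (Fin (m + 2)) ℝ := Matrix.of fun j' j =>
        if j' = j then 1 else if (j' : ℕ) + 1 = (j : ℕ) then -1 else 0 with hS
      have hdetS : S.det = 1 := by
        have htri : S.BlockTriangular id := by
          intro r j h
          simp only [hS, Matrix.of_apply]
          rw [if_neg (by intro hc; subst hc; exact absurd h (lt_irrefl _)),
            if_neg (by simp only [id] at h; omega)]
        rw [Matrix.det_of_upperTriangular htri]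
        have : ∀ j : Fin (m + 2), S j j = 1 := by
          intro j; simp [hS]
        rw [Finset.prod_congr rfl (fun j _ => this j)]
        simp
      set E : Matrix (Fin (m + 2)) (Fin (m + 2)) ℝ := Hmat * S with hE
      have hEcol0 : ∀ i, E i 0 = Hmat i 0 := by
        intro i
        rw [hE, Matrix.mul_apply]
        rw [Finset.sum_eq_single (0 : Fin (m + 2))]
        · simp [hS]
        · intro j' _ hj'
          rw [show S j' 0 = 0 by
            simp only [hS, Matrix.of_apply]
            rw [if_neg hj', if_neg (by simp)]]
          ring
        · intro h; exact absurd (Finset.mem_univ _) h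
      have hEcolsucc : ∀ i, ∀ j₀ : Fin (m + 1), E i j₀.succ = Hmat i j₀.succ - Hmat i j₀.castSucc := by
        intro i j₀
        rw [hE, Matrix.mul_apply]
        have hvanish : ∀ j' ∈ Finset.univ, j' ∉ ({j₀.castSucc, j₀.succ} : Finset (Fin (m + 2))) →
            Hmat i j' * S j' j₀.succ = 0 := by
          intro j' _ hj'
          simp only [Finset.mem_insert, Finset.mem_singleton, not_or] at hj'
          rw [show S j' j₀.succ = 0 by
            simp only [hS, Matrix.of_apply]
            rw [if_neg hj'.2, if_neg (by
              simp only [Fin.val_succ]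
              intro hc
              exact hj'.1 (Fin.ext (by simp only [Fin.coe_castSucc]; omega)))]]
          ring
        rw [← Finset.sum_subset (Finset.subset_univ _) hvanish]
        rw [Finset.sum_pair (by
          intro hc
          have := congrArg Fin.val hc
          simp at this)]
        have h1 : S j₀.castSucc j₀.succ = -1 := by
          simp only [hS, Matrix.of_apply]
          rw [if_neg (by
            intro hc
            have := congrArg Fin.val hc
            simp at this), if_pos (by simp)]
        have h2 : S j₀.succ j₀.succ = 1 := by simp [hS]
        rw [h1, h2]
        ring
      have hrow0 : E 0 0 = 1 ∧ ∀ j₀ : Fin (m + 1), E 0 j₀.succ = 0 := by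
        constructor
        · rw [hEcol0]
          simp only [hHmat, Matrix.of_apply, hψ]
          field_simp [hne (x 0) (hxI 0)]
        · intro j₀
          rw [hEcolsucc]
          simp only [hHmat, Matrix.of_apply, hψ]
          field_simp [hne (x j₀.succ) (hxI j₀.succ), hne (x j₀.castSucc) (hxI j₀.castSucc)]
          ring
      -- FTC on the submatrix entries
      have hxlt : ∀ j : Fin (m + 1), x j.castSucc < x j.succ :=
        fun j => hx (Fin.castSucc_lt_succ (i := j))
      have hIccsub : ∀ j : Fin (m + 1), Set.Icc (x j.castSucc) (x j.succ) ⊆ Set.Ioo a b := by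
        intro j t ht
        exact ⟨lt_of_lt_of_le (hxI j.castSucc).1 ht.1, lt_of_le_of_lt ht.2 (hxI j.succ).2⟩
      have hftc : ∀ i : Fin (m + 1), ∀ j : Fin (m + 1),
          ψ i.succ (x j.succ) - ψ i.succ (x j.castSucc)
            = ∫ t in (x j.castSucc)..(x j.succ), H i 0 t := by
        intro i j
        rw [intervalIntegral.integral_eq_sub_of_hasDerivAt (f := ψ i.succ)]
        · intro t ht
          rw [Set.uIcc_of_le (hxlt j).le] at ht
          exact hHd i t (hIccsub j ht)
        · apply ContinuousOn.intervalIntegrable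
          rw [Set.uIcc_of_le (hxlt j).le]
          exact (hHcont i).mono (hIccsub j)
      have hdetE : E.det = Matrix.det (Matrix.of fun i j : Fin (m + 1) =>
          ∫ t in (x j.castSucc)..(x j.succ), H i 0 t) := by
        rw [Matrix.det_succ_row_zero]
        rw [Finset.sum_eq_single (0 : Fin (m + 2))]
        · rw [hrow0.1]
          simp only [Fin.val_zero, pow_zero, one_mul, mul_one]
          have hsubm : (E.submatrix Fin.succ (Fin.succAbove 0))
              = Matrix.of fun i j : Fin (m + 1) => ∫ t in (x j.castSucc)..(x j.succ), H i 0 t := by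
            ext i j
            simp only [Matrix.submatrix_apply, Fin.succAbove_zero, Matrix.of_apply]
            rw [hEcolsucc i.succ j, ← hftc i j]
            simp only [hHmat, Matrix.of_apply]
          rw [hsubm]
        · intro j _ hj
          rcases Fin.eq_zero_or_eq_succ j with rfl | ⟨j₀, rfl⟩
          · exact absurd rfl hj
          · rw [hrow0.2 j₀]
            ring
        · intro h; exact absurd (Finset.mem_univ _) h
      have hintpos : 0 < Matrix.det (Matrix.of fun i j : Fin (m + 1) =>
          ∫ t in (x j.castSucc)..(x j.succ), H i 0 t) :=
        det_integral_pos (fun i => H i 0) hHcont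
          (fun s hs hsI => hIH s hs hsI) x hx hxI
      have hprodpos : 0 < ∏ j : Fin (m + 2), G 0 0 (x j) :=
        Finset.prod_pos (fun j _ => hpos (x j) (hxI j))
      have hEdet2 : E.det = Hmat.det := by rw [hE, Matrix.det_mul, hdetS, mul_one]
      rw [hfact1, Matrix.det_mul, Matrix.det_diagonal, ← hEdet2, hdetE]
      exact mul_pos hintpos hprodpos




/-- If `g_0, …, g_n` are continuous on `[a, b]` and `n` times differentiable on
`(a, b)`, with `g_0 > 0` on `[a, b]` and all the Wronskians `W_0^k`,
`k = 1, …, n`, strictly positive on `(a, b)`, then `(g_0, …, g_n)` is an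
M₊-system on `[a, b]`. -/
theorem wronskian_pos_mplus (a b : ℝ) (hab : a < b) (n : ℕ)
    (g : Fin (n + 1) → ℝ → ℝ) (hg : ∀ i, ContinuousOn (g i) (Set.Icc a b))
    (hdiff : ∀ i, ∀ j : ℕ, j < n →
      DifferentiableOn ℝ (iteratedDerivWithin j (g i) (Set.Ioo a b)) (Set.Ioo a b))
    (hg0 : ∀ x ∈ Set.Icc a b, 0 < g 0 x)
    (hW : ∀ x ∈ Set.Ioo a b, ∀ k : ℕ, 1 ≤ k → ∀ hk : k ≤ n,
      0 < wronskian a b g k hk x) :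
    ∀ k : ℕ, ∀ hk : k ≤ n,
      IsTPlusSystem a b (fun i : Fin (k + 1) => g (Fin.castLE (by omega) i)) := by
  -- the tower of iterated derivatives
  set T : Fin (n + 1) → ℕ → ℝ → ℝ :=
    fun i j => iteratedDerivWithin j (g i) (Set.Ioo a b) with hTdef
  have hT0 : ∀ i, T i 0 = g i := fun i => iteratedDerivWithin_zero
  have hTower : ∀ i, Tower (Set.Ioo a b) (T i) n := by
    intro i j hj y hy
    have hdAt : DifferentiableAt ℝ (iteratedDerivWithin j (g i) (Set.Ioo a b)) y :=
      (hdiff i j hj).differentiableAt (isOpen_Ioo.mem_nhds hy)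
    have heq : T i (j + 1) y = deriv (iteratedDerivWithin j (g i) (Set.Ioo a b)) y := by
      rw [hTdef]
      simp only
      rw [iteratedDerivWithin_succ,
        derivWithin_of_isOpen isOpen_Ioo hy]
    rw [heq]
    exact hdAt.hasDerivAt
  have hIub : Set.Ioo a b ⊆ Set.Icc a b := Set.Ioo_subset_Icc_self
  -- Wronskian positivity in tower form
  have hWT : ∀ k : ℕ, ∀ hk : k ≤ n, ∀ x ∈ Set.Ioo a b,
      0 < Matrix.det (Matrix.of fun i j : Fin (k + 1) =>
        T (Fin.castLE (by omega) i) (j : ℕ) x) := by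
    intro k hk x hx
    rcases Nat.eq_zero_or_pos k with rfl | hkpos
    · rw [Matrix.det_fin_one]
      simp only [Matrix.of_apply, hTdef, Fin.val_zero, iteratedDerivWithin_zero]
      exact hg0 x (hIub hx)
    · exact hW x hx k hkpos hk
  intro k hk
  intro x hxmono hxIcc
  -- the truncated system
  have hk1 : k + 1 ≤ n + 1 := by omega
  set Gk : Fin (k + 1) → ℕ → ℝ → ℝ := fun i => T (Fin.castLE hk1 i) with hGk
  have hGkTower : ∀ i, Tower (Set.Ioo a b) (Gk i) n := fun i => hTower _
  have hGkW : ∀ k' : ℕ, (hk' : k' + 1 ≤ k + 1) → ∀ y ∈ Set.Ioo a b,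
      0 < Matrix.det (Matrix.of fun i j : Fin (k' + 1) => Gk (Fin.castLE hk' i) (j : ℕ) y) := by
    intro k' hk' y hy
    have h := hWT k' (by omega) y hy
    have hmat : (Matrix.of fun i j : Fin (k' + 1) => Gk (Fin.castLE hk' i) (j : ℕ) y)
        = (Matrix.of fun i j : Fin (k' + 1) => T (Fin.castLE (by omega) i) (j : ℕ) y) := by
      ext i j
      simp only [Matrix.of_apply, hGk]
      rw [Fin.castLE_castLE]
    rw [hmat]
    exact h
  -- goal in terms of Gk
  have hgoalmat : (Matrix.of fun i j : Fin (k + 1) => g (Fin.castLE (by omega) i) (x j))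
      = Matrix.of fun i j => Gk i 0 (x j) := by
    ext i j
    simp only [Matrix.of_apply, hGk, hT0]
  rw [hgoalmat]
  -- the k = 0 case is immediate
  rcases Nat.eq_zero_or_pos k with rfl | hkpos
  · rw [Matrix.det_fin_one]
    simp only [Matrix.of_apply, hGk, hTdef, iteratedDerivWithin_zero]
    exact hg0 (x 0) (hxIcc 0)
  obtain ⟨k', rfl⟩ : ∃ k', k = k' + 1 := ⟨k - 1, by omega⟩
  -- reduced system
  obtain ⟨H, hHT, hHW, hHd⟩ := reduce (by omega : 1 ≤ k' + 1) (by omega : k' + 1 ≤ n) Gk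
    hGkTower hGkW
  -- interior positivity for the full truncated system
  have hint := tplus_interior (k' + 1) Gk (fun i => (hGkTower i).mono hk) hGkW
  -- interior positivity for the reduced system
  have hintH := tplus_interior k' H (fun i => (hHT i).mono (by omega : k' ≤ n - 1)) hHW
  have hGki0 : ∀ i, Gk i 0 = g (Fin.castLE hk1 i) := fun i => hT0 _
  have hGk00 : Gk 0 0 = g 0 := by
    rw [hGki0, show Fin.castLE hk1 (0 : Fin (k' + 1 + 1)) = (0 : Fin (n + 1)) from Fin.ext rfl]
  have hg0ne : ∀ t ∈ Set.Icc a b, g 0 t ≠ 0 := fun t ht => (hg0 t ht).ne'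
  have hxlt : ∀ j : Fin (k' + 1), x j.castSucc < x j.succ :=
    fun j => hxmono (Fin.castSucc_lt_succ (i := j))
  have hgapI : ∀ j : Fin (k' + 1), Set.Ioo (x j.castSucc) (x j.succ) ⊆ Set.Ioo a b :=
    fun j t ht => ⟨lt_of_le_of_lt (hxIcc j.castSucc).1 ht.1,
      lt_of_lt_of_le ht.2 (hxIcc j.succ).2⟩
  -- Step 1: the determinant is nonzero
  have hne0 : (Matrix.of fun i j : Fin (k' + 2) => Gk i 0 (x j)).det ≠ 0 := by
    intro hdet0
    obtain ⟨c, hc0, hcM⟩ := Matrix.exists_vecMul_eq_zero_iff.mpr hdet0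
    have hcomp : ∀ j, ∑ i, c i * Gk i 0 (x j) = 0 := by
      intro j
      have := congrFun hcM j
      simpa [Matrix.vecMul, dotProduct] using this
    set v : ℝ → ℝ := fun t => ∑ i, c i * (Gk i 0 t * (Gk 0 0 t)⁻¹) with hv
    have hvcont : ContinuousOn v (Set.Icc a b) := by
      apply continuousOn_finset_sum
      intro i _
      apply ContinuousOn.mul continuousOn_const
      apply ContinuousOn.mul
      · rw [hGki0]; exact hg _
      · rw [hGk00]
        exact ContinuousOn.inv₀ (hg 0) hg0ne
    have hvz : ∀ j, v (x j) = 0 := by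
      intro j
      have he : v (x j) = (∑ i, c i * Gk i 0 (x j)) * (Gk 0 0 (x j))⁻¹ := by
        rw [hv, Finset.sum_mul]
        exact Finset.sum_congr rfl (fun i _ => by ring)
      rw [he, hcomp j, zero_mul]
    have hvderiv : ∀ y ∈ Set.Ioo a b,
        HasDerivAt v (∑ i : Fin (k' + 1), c i.succ * H i 0 y) y := by
      intro y hy
      have hsum : HasDerivAt v (∑ i : Fin (k' + 2),
          Fin.cases 0 (fun i₀ : Fin (k' + 1) => c i₀.succ * H i₀ 0 y) i) y := by
        apply HasDerivAt.fun_sum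
        intro i _
        induction i using Fin.cases with
        | zero =>
          have hEq : (fun t => c 0 * (Gk 0 0 t * (Gk 0 0 t)⁻¹)) =ᶠ[nhds y]
              (fun _ => c 0) := by
            filter_upwards [isOpen_Ioo.mem_nhds hy] with t ht
            rw [hGk00]
            field_simp [hg0ne t (hIub ht)]
          have := (hasDerivAt_const y (c 0)).congr_of_eventuallyEq hEq
          simpa using this
        | succ i₀ =>
          have := (hHd i₀ y hy).const_mul (c i₀.succ)
          simpa using this
      rw [Fin.sum_univ_succ] at hsum
      simpa using hsum
    have hrolle : ∀ j : Fin (k' + 1), ∃ y ∈ Set.Ioo (x j.castSucc) (x j.succ),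
        (∑ i : Fin (k' + 1), c i.succ * H i 0 y) = 0 := by
      intro j
      apply exists_hasDerivAt_eq_zero (hxlt j)
        (hvcont.mono (Set.Icc_subset_Icc (hxIcc j.castSucc).1 (hxIcc j.succ).2))
        (by rw [hvz, hvz])
        (fun t ht => hvderiv t (hgapI j ht))
    choose y hyIoo hyzero using hrolle
    by_cases hc' : (fun i : Fin (k' + 1) => c i.succ) = 0
    · -- then c 0 ≠ 0 and u (x 0) = c 0 * g 0 (x 0) = 0, contradiction
      have hc00 : c 0 ≠ 0 := by
        intro hc00
        apply hc0
        funext i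
        induction i using Fin.cases with
        | zero => exact hc00
        | succ i₀ => exact congrFun hc' i₀
      have h0 := hcomp 0
      rw [Fin.sum_univ_succ] at h0
      have hzero : ∀ i₀ : Fin (k' + 1), c i₀.succ * Gk i₀.succ 0 (x 0) = 0 := by
        intro i₀
        have hci : c i₀.succ = 0 := by simpa using congrFun hc' i₀
        rw [hci, zero_mul]
      rw [Finset.sum_congr rfl (fun i _ => hzero i), Finset.sum_const, smul_zero,
        add_zero] at h0
      rw [hGk00] at h0
      exact hg0ne (x 0) (hxIcc 0) (by
        rcases mul_eq_zero.mp h0 with h | h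
        · exact absurd h hc00
        · exact h)
    · -- reduced system determinant vanishes at the Rolle points: contradiction
      have hymono : StrictMono y := by
        rw [Fin.strictMono_iff_lt_succ]
        intro i
        have h1 : y i.castSucc < x i.castSucc.succ := (hyIoo i.castSucc).2
        have h2 : x i.succ.castSucc < y i.succ := (hyIoo i.succ).1
        have he : i.castSucc.succ = i.succ.castSucc := Fin.ext (by simp)
        rw [he] at h1
        exact h1.trans h2
      have hyI : ∀ j, y j ∈ Set.Ioo a b := fun j => hgapI j (hyIoo j)
      have hdetH : (Matrix.of fun i j : Fin (k' + 1) => H i 0 (y j)).det = 0 := by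
        rw [← Matrix.exists_vecMul_eq_zero_iff]
        refine ⟨fun i => c i.succ, hc', ?_⟩
        funext j
        have : (∑ i : Fin (k' + 1), c i.succ * H i 0 (y j)) = 0 := hyzero j
        simpa [Matrix.vecMul, dotProduct] using this
      exact absurd hdetH (hintH y hymono hyI).ne'
  -- Step 2: the determinant is nonnegative, via a limit from interior configurations
  set L : Fin (k' + 2) := Fin.last (k' + 1) with hL
  set w : ℝ → Fin (k' + 2) → ℝ := fun t j =>
    if j = 0 then x 0 + t else if j = L then x L - t else x j with hw
  have h01 : (0 : Fin (k' + 2)) < 1 := by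
    rw [Fin.lt_def]
    simp [Fin.val_one]
  have h1L : (1 : Fin (k' + 2)) ≤ L := by
    rw [Fin.le_def]
    simp [hL, Fin.val_one, Fin.last]
  have hL'L : (Fin.last k').castSucc < L := by
    rw [Fin.lt_def]
    simp [hL]
  have hgap1 : 0 < x 1 - x 0 := by
    have := hxmono h01
    linarith
  have hgap2 : 0 < x L - x ((Fin.last k').castSucc) := by
    have := hxmono hL'L
    linarith
  set δ : ℝ := min (x 1 - x 0) (x L - x ((Fin.last k').castSucc)) / 2 with hδ
  have hδpos : 0 < δ := by
    rw [hδ]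
    have := lt_min hgap1 hgap2
    positivity
  have hL0 : L ≠ 0 := by
    rw [hL]
    intro hc
    have := congrArg Fin.val hc
    simp [Fin.last] at this
  have hx0L : x 0 ≤ x L := hxmono.monotone (Fin.zero_le L)
  have hwI : ∀ t ∈ Set.Ioo (0:ℝ) δ, ∀ j, w t j ∈ Set.Ioo a b := by
    intro t ht j
    have hδ1 : δ ≤ (x 1 - x 0) / 2 := by
      rw [hδ]
      have := min_le_left (x 1 - x 0) (x L - x ((Fin.last k').castSucc))
      linarith
    have hδ2 : δ ≤ (x L - x ((Fin.last k').castSucc)) / 2 := by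
      rw [hδ]
      have := min_le_right (x 1 - x 0) (x L - x ((Fin.last k').castSucc))
      linarith
    have hx1L : x 1 ≤ x L := hxmono.monotone h1L
    by_cases hj0 : j = 0
    · subst hj0
      rw [hw]
      simp only [if_pos rfl, if_true]
      constructor
      · have := (hxIcc 0).1
        linarith [ht.1]
      · have := (hxIcc L).2
        linarith [ht.2]
    · by_cases hjL : j = L
      · subst hjL
        rw [hw]
        simp only [if_neg hj0, if_pos rfl, if_true]
        constructor
        · have h1 := (hxIcc 0).1
          have h2 : x 0 ≤ x ((Fin.last k').castSucc) := hxmono.monotone (Fin.zero_le _)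
          linarith [ht.2]
        · have := (hxIcc L).2
          linarith [ht.1]
      · rw [hw]
        simp only [if_neg hj0, if_neg hjL]
        have hj0' : 0 < j := lt_of_le_of_ne (Fin.zero_le j) (Ne.symm hj0)
        have hjL' : j < L := lt_of_le_of_ne (Fin.le_last j) hjL
        constructor
        · exact lt_of_le_of_lt (hxIcc 0).1 (hxmono hj0')
        · exact lt_of_lt_of_le (hxmono hjL') (hxIcc L).2
  have hwmono : ∀ t ∈ Set.Ioo (0:ℝ) δ, StrictMono (w t) := by
    intro t ht
    have hδ1 : δ ≤ (x 1 - x 0) / 2 := by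
      rw [hδ]
      have := min_le_left (x 1 - x 0) (x L - x ((Fin.last k').castSucc))
      linarith
    have hδ2 : δ ≤ (x L - x ((Fin.last k').castSucc)) / 2 := by
      rw [hδ]
      have := min_le_right (x 1 - x 0) (x L - x ((Fin.last k').castSucc))
      linarith
    rw [Fin.strictMono_iff_lt_succ]
    intro i
    have hisuccne0 : i.succ ≠ 0 := Fin.succ_ne_zero i
    have hicastneL : i.castSucc ≠ L := by
      rw [hL]
      intro hc
      have := congrArg Fin.val hc
      simp [Fin.last] at this
      omega
    rw [hw]
    simp only
    by_cases hi0 : i.castSucc = 0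
    · have hieq : i = 0 := by
        apply Fin.ext
        have := congrArg Fin.val hi0
        simpa using this
      rw [if_pos hi0, if_neg hisuccne0]
      by_cases hiL : i.succ = L
      · rw [if_pos hiL]
        have hL1 : (1 : Fin (k' + 2)) = L := by
          rw [← hiL]
          apply Fin.ext
          simp [hieq, Fin.val_one]
        rw [← hL1]
        linarith [ht.2]
      · rw [if_neg hiL]
        have hsucc1 : i.succ = 1 := by
          apply Fin.ext
          simp [hieq, Fin.val_one]
        rw [hsucc1]
        linarith [ht.2]
    · rw [if_neg hi0, if_neg hicastneL, if_neg hisuccne0]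
      by_cases hiL : i.succ = L
      · rw [if_pos hiL]
        have hieq : i = Fin.last k' := by
          apply Fin.ext
          have := congrArg Fin.val hiL
          simp [hL, Fin.last] at this
          simpa using this
        have : i.castSucc = (Fin.last k').castSucc := by rw [hieq]
        rw [this]
        linarith [ht.2]
      · rw [if_neg hiL]
        exact hxmono (Fin.castSucc_lt_succ (i := i))
  -- the limit of interior determinants
  have hIooMem : Set.Ioo (0:ℝ) δ ∈ nhdsWithin (0:ℝ) (Set.Ioi 0) :=
    Ioo_mem_nhdsGT_of_mem ⟨le_refl 0, hδpos⟩
  have hwj : ∀ j, Filter.Tendsto (fun t => w t j) (nhdsWithin 0 (Set.Ioi 0)) (nhds (x j)) := by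
    intro j
    rw [hw]
    simp only
    by_cases hj0 : j = 0
    · subst hj0
      simp only [if_pos rfl, if_true]
      have : Filter.Tendsto (fun t : ℝ => x 0 + t) (nhds 0) (nhds (x 0 + 0)) :=
        (continuous_const.add continuous_id).tendsto 0
      rw [add_zero] at this
      exact this.mono_left nhdsWithin_le_nhds
    · by_cases hjL : j = L
      · subst hjL
        simp only [if_neg hj0, if_pos rfl, if_true]
        have : Filter.Tendsto (fun t : ℝ => x L - t) (nhds 0) (nhds (x L - 0)) :=
          (continuous_const.sub continuous_id).tendsto 0
        rw [sub_zero] at this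
        exact this.mono_left nhdsWithin_le_nhds
      · simp only [if_neg hj0, if_neg hjL]
        exact tendsto_const_nhds
  have hwjIcc : ∀ j, Filter.Tendsto (fun t => w t j) (nhdsWithin 0 (Set.Ioi 0))
      (nhdsWithin (x j) (Set.Icc a b)) := by
    intro j
    rw [tendsto_nhdsWithin_iff]
    refine ⟨hwj j, ?_⟩
    filter_upwards [hIooMem] with t ht
    exact hIub (hwI t ht j)
  have htend : Filter.Tendsto (fun t => (Matrix.of fun i j : Fin (k' + 2) => Gk i 0 (w t j)).det)
      (nhdsWithin 0 (Set.Ioi 0)) (nhds ((Matrix.of fun i j : Fin (k' + 2) => Gk i 0 (x j)).det)) := by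
    have hmat : Filter.Tendsto (fun t => (Matrix.of fun i j : Fin (k' + 2) => Gk i 0 (w t j)))
        (nhdsWithin 0 (Set.Ioi 0)) (nhds (Matrix.of fun i j : Fin (k' + 2) => Gk i 0 (x j))) := by
      apply tendsto_pi_nhds.mpr
      intro i
      rw [tendsto_pi_nhds]
      intro j
      have hcw : ContinuousWithinAt (g (Fin.castLE hk1 i)) (Set.Icc a b) (x j) :=
        hg (Fin.castLE hk1 i) (x j) (hxIcc j)
      have := hcw.tendsto.comp (hwjIcc j)
      simp only [Matrix.of_apply, hGki0]
      exact this
    exact ((continuous_id.matrix_det).tendsto _).comp hmat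
  have hnn : 0 ≤ (Matrix.of fun i j : Fin (k' + 2) => Gk i 0 (x j)).det := by
    apply ge_of_tendsto htend
    filter_upwards [hIooMem] with t ht
    exact (hint (w t) (hwmono t ht) (hwI t ht)).le
  exact lt_of_le_of_ne hnn (Ne.symm hne0)
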